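/- Let Δ be a positive bounded operator on a complex Hilbert space H and let M be a closed subspace of H. Let C : M → M be the compression of Δ² to M, i.e. C = P_M Δ² ι_M where ι_M is the inclusion of M into H and P_M is the orthogonal projection of H onto M. If the closure of the range of Δ is finite-dimensional and its dimension equals the dimension of the closure of the range of C, then the closure of Δ(M) equals the closure of the range of Δ, i.e. closure(Δ M) = closure(Δ H). -/

import Mathlib

open ContinuousLinearMap

/-- let `Δ ≥ 0` on `H`, `M ⊆ H` a closed subspace and `C = P_M Δ² ι_M`
the compression of `Δ²` to `M`. If the closure of the range of `Δ` is
finite-dimensional with dimension equal to that of the closure of the range of `C`,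
then `closure (Δ M) = closure (Δ H)`. -/
theorem stmt7 {H : Type*} [NormedAddCommGroup H] [InnerProductSpace ℂ H] [CompleteSpace H]
    (Δ : H →L[ℂ] H) (hΔ : Δ.IsPositive)
    (M : Submodule ℂ H) [CompleteSpace M]
    (C : M →L[ℂ] M)
    (hC : ∀ x : M, C x = M.orthogonalProjectionOnto (Δ (Δ (x : H))))
    (hfin : FiniteDimensional ℂ ↥((LinearMap.range (Δ : H →ₗ[ℂ] H)).topologicalClosure))
    (hrank : Module.rank ℂ ↥((LinearMap.range (Δ : H →ₗ[ℂ] H)).topologicalClosure) =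
      Module.rank ℂ ↥((LinearMap.range (C : M →ₗ[ℂ] M)).topologicalClosure)) :
    closure (Δ '' (M : Set H)) = closure (Set.range Δ) := by
  classical
  set R := (LinearMap.range (Δ : H →ₗ[ℂ] H)).topologicalClosure with hR
  set N := Submodule.map (Δ : H →ₗ[ℂ] H) M with hN
  have hNR : N ≤ R := by
    refine le_trans ?_ (Submodule.le_topologicalClosure _)
    rintro y ⟨x, -, rfl⟩
    exact ⟨x, rfl⟩
  haveI : FiniteDimensional ℂ N := Submodule.finiteDimensional_of_le hNR
  set f : H →ₗ[ℂ] M := (M.orthogonalProjectionOnto).toLinearMap ∘ₗ (Δ : H →ₗ[ℂ] H) with hf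
  have hCle : LinearMap.range (C : M →ₗ[ℂ] M) ≤ N.map f := by
    rintro y ⟨x, rfl⟩
    refine ⟨Δ x, ⟨x, x.2, rfl⟩, ?_⟩
    simp [hf, hC]
  haveI : FiniteDimensional ℂ (N.map f) := inferInstance
  haveI hfinC : FiniteDimensional ℂ (LinearMap.range (C : M →ₗ[ℂ] M)) :=
    Submodule.finiteDimensional_of_le hCle
  have hclC : (LinearMap.range (C : M →ₗ[ℂ] M)).topologicalClosure = LinearMap.range (C : M →ₗ[ℂ] M) :=
    (Submodule.closed_of_finiteDimensional _).submodule_topologicalClosure_eq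
  have hfr : Module.finrank ℂ R = Module.finrank ℂ (LinearMap.range (C : M →ₗ[ℂ] M)) := by
    have hrank' := hrank
    rw [hclC] at hrank'
    exact congrArg Cardinal.toNat hrank'
  have hchain : Module.finrank ℂ R ≤ Module.finrank ℂ N := by
    calc Module.finrank ℂ R = Module.finrank ℂ (LinearMap.range (C : M →ₗ[ℂ] M)) := hfr
      _ ≤ Module.finrank ℂ (N.map f) := Submodule.finrank_mono hCle
      _ ≤ Module.finrank ℂ N := Submodule.finrank_map_le f N
  have hNeqR : N = R :=
    Submodule.eq_of_le_of_finrank_le hNR hchain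
  have h1 : Δ '' (M : Set H) = (N : Set H) := by
    simp [hN]
  rw [h1, (Submodule.closed_of_finiteDimensional N).closure_eq, hNeqR]
  rw [hR, Submodule.topologicalClosure_coe, LinearMap.coe_range]
  rfl
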